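/- For α > 2, with I(α,α) = ∫_{ℝ} |sin t|^α / |t|^α dt, one has √(6/α)·√α·Γ(α+1)√π/Γ(α+3/2) ≤ I(α,α) ≤ √(6/α)·√π·(1 + 1/(α-1)). -/

import Mathlib

open Real MeasureTheory Set

private lemma nonneg_of_deriv {g g' : ℝ → ℝ} (hd : ∀ x, HasDerivAt g (g' x) x)
    (h0 : g 0 = 0) (hge : ∀ x, 0 ≤ x → 0 ≤ g' x) {t : ℝ} (ht : 0 ≤ t) : 0 ≤ g t := by
  have hmono : MonotoneOn g (Ici (0:ℝ)) := by
    apply monotoneOn_of_deriv_nonneg (convex_Ici 0)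
      (fun x _ => (hd x).continuousAt.continuousWithinAt)
      (fun x hx => (hd x).differentiableAt.differentiableWithinAt)
    intro x hx
    rw [(hd x).deriv]
    exact hge x (le_of_lt (by simpa using hx))
  have := hmono (self_mem_Ici) (mem_Ici.mpr ht) ht
  simpa [h0] using this

private lemma sin_ge_cubic {x : ℝ} (hx : 0 ≤ x) : x - x ^ 3 / 6 ≤ Real.sin x := by
  have := nonneg_of_deriv (g := fun x => Real.sin x - x + x ^ 3 / 6)
    (g' := fun x => Real.cos x - 1 + x ^ 2 / 2)
    (fun x => by
      have h := ((Real.hasDerivAt_sin x).sub (hasDerivAt_id' (x := x))).add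
        ((hasDerivAt_pow 3 x).div_const 6)
      exact h.congr_deriv (by push_cast; ring))
    (by simp)
    (fun x hx => by nlinarith [Real.one_sub_sq_div_two_le_cos (x := x)]) hx
  linarith

private lemma cos_le_quartic' {x : ℝ} (hx : 0 ≤ x) :
    Real.cos x ≤ 1 - x ^ 2 / 2 + x ^ 4 / 24 := by
  have := nonneg_of_deriv (g := fun x => 1 - x ^ 2 / 2 + x ^ 4 / 24 - Real.cos x)
    (g' := fun x => -x + x ^ 3 / 6 + Real.sin x)
    (fun x => by
      have h := (((hasDerivAt_const x (1:ℝ)).sub ((hasDerivAt_pow 2 x).div_const 2)).add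
        ((hasDerivAt_pow 4 x).div_const 24)).sub (Real.hasDerivAt_cos x)
      exact h.congr_deriv (by push_cast; ring))
    (by simp)
    (fun x hx => by nlinarith [sin_ge_cubic hx]) hx
  linarith

private lemma sin_le_quintic {x : ℝ} (hx : 0 ≤ x) :
    Real.sin x ≤ x - x ^ 3 / 6 + x ^ 5 / 120 := by
  have := nonneg_of_deriv (g := fun x => x - x ^ 3 / 6 + x ^ 5 / 120 - Real.sin x)
    (g' := fun x => 1 - x ^ 2 / 2 + x ^ 4 / 24 - Real.cos x)
    (fun x => by
      have h := (((hasDerivAt_id' (x := x)).sub ((hasDerivAt_pow 3 x).div_const 6)).add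
        ((hasDerivAt_pow 5 x).div_const 120)).sub (Real.hasDerivAt_sin x)
      exact h.congr_deriv (by push_cast; ring))
    (by simp)
    (fun x hx => by nlinarith [cos_le_quartic' hx]) hx
  linarith

private lemma exp_neg_le_quad {x : ℝ} (hx : 0 ≤ x) :
    Real.exp (-x) ≤ 1 - x + x ^ 2 / 2 := by
  have := nonneg_of_deriv (g := fun x => 1 - x + x ^ 2 / 2 - Real.exp (-x))
    (g' := fun x => -1 + x + Real.exp (-x))
    (fun x => by
      have he : HasDerivAt (fun x : ℝ => Real.exp (-x)) (-Real.exp (-x)) x := by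
        simpa using (hasDerivAt_neg x).exp
      have h := (((hasDerivAt_const x (1:ℝ)).sub (hasDerivAt_id' (x := x))).add
        ((hasDerivAt_pow 2 x).div_const 2)).sub he
      exact h.congr_deriv (by push_cast; ring))
    (by simp)
    (fun x hx => by nlinarith [Real.add_one_le_exp (-x)]) hx
  linarith

private lemma exp_neg_ge_cubic {x : ℝ} (hx : 0 ≤ x) :
    1 - x + x ^ 2 / 2 - x ^ 3 / 6 ≤ Real.exp (-x) := by
  have := nonneg_of_deriv (g := fun x => Real.exp (-x) - (1 - x + x ^ 2 / 2 - x ^ 3 / 6))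
    (g' := fun x => -Real.exp (-x) + 1 - x + x ^ 2 / 2)
    (fun x => by
      have he : HasDerivAt (fun x : ℝ => Real.exp (-x)) (-Real.exp (-x)) x := by
        simpa using (hasDerivAt_neg x).exp
      have h := he.sub ((((hasDerivAt_const x (1:ℝ)).sub (hasDerivAt_id' (x := x))).add
        ((hasDerivAt_pow 2 x).div_const 2)).sub ((hasDerivAt_pow 3 x).div_const 6))
      exact h.congr_deriv (by push_cast; ring))
    (by simp)
    (fun x hx => by nlinarith [exp_neg_le_quad hx]) hx
  linarith

private lemma beta_val {α : ℝ} (hα : 0 < α) :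
    ∫ x in (0:ℝ)..1, x ^ (-(1/2) : ℝ) * (1 - x) ^ α
      = Real.sqrt π * Real.Gamma (α + 1) / Real.Gamma (α + 3/2) := by
  have hG : (0:ℝ) < Real.Gamma (α + 3/2) := Real.Gamma_pos_of_pos (by linarith)
  have key := Complex.Gamma_mul_Gamma_eq_betaIntegral
    (s := ((1/2 : ℝ) : ℂ)) (t := ((α + 1 : ℝ) : ℂ))
    (by norm_num) (by simp; linarith)
  rw [Complex.betaIntegral] at key
  have hpt : ∀ x ∈ uIcc (0:ℝ) 1,
      (x:ℂ) ^ (((1/2 : ℝ):ℂ) - 1) * (1 - (x:ℂ)) ^ (((α + 1 : ℝ):ℂ) - 1)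
        = ((x ^ (-(1/2):ℝ) * (1 - x) ^ α : ℝ) : ℂ) := by
    intro x hx
    rw [uIcc_of_le (by norm_num)] at hx
    obtain ⟨hx0, hx1⟩ := hx
    have e1 : (((1/2 : ℝ)):ℂ) - 1 = ((-(1/2) : ℝ) : ℂ) := by push_cast; ring
    have e2 : (((α + 1 : ℝ)):ℂ) - 1 = ((α : ℝ) : ℂ) := by push_cast; ring
    have e3 : (1 : ℂ) - (x:ℂ) = ((1 - x : ℝ) : ℂ) := by push_cast; ring
    rw [e1, e2, e3, ← Complex.ofReal_cpow hx0, ← Complex.ofReal_cpow (by linarith),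
      ← Complex.ofReal_mul]
  rw [intervalIntegral.integral_congr hpt, intervalIntegral.integral_ofReal] at key
  have e4 : ((1/2 : ℝ) : ℂ) + ((α + 1 : ℝ) : ℂ) = ((α + 3/2 : ℝ) : ℂ) := by push_cast; ring
  rw [e4, Complex.Gamma_ofReal, Complex.Gamma_ofReal, Complex.Gamma_ofReal,
    ← Complex.ofReal_mul, ← Complex.ofReal_mul] at key
  have key' := Complex.ofReal_inj.mp key
  rw [Real.Gamma_one_half_eq] at key'
  rw [eq_div_iff hG.ne']
  linarith [key']

private lemma int_one_sub_sq {α : ℝ} (hα : 0 < α) :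
    ∫ u in (0:ℝ)..1, (1 - u^2) ^ α
      = Real.sqrt π * Real.Gamma (α + 1) / Real.Gamma (α + 3/2) / 2 := by
  have himg : (fun u : ℝ => u^2) '' Ioo 0 1 = Ioo 0 1 := by
    ext x
    constructor
    · rintro ⟨u, ⟨hu0, hu1⟩, rfl⟩
      simp only [mem_Ioo]
      constructor
      · positivity
      · nlinarith
    · rintro ⟨hx0, hx1⟩
      refine ⟨Real.sqrt x, ⟨Real.sqrt_pos.mpr hx0, ?_⟩, Real.sq_sqrt hx0.le⟩
      calc Real.sqrt x < Real.sqrt 1 := Real.sqrt_lt_sqrt hx0.le hx1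
      _ = 1 := Real.sqrt_one
  have hcv := integral_image_eq_integral_abs_deriv_smul (f := fun u : ℝ => u^2)
    (f' := fun u : ℝ => 2*u) (s := Ioo (0:ℝ) 1) measurableSet_Ioo
    (fun x _ => by
      simpa using ((hasDerivAt_pow 2 x).hasDerivWithinAt (s := Ioo (0:ℝ) 1)))
    (fun a ha b hb hab => by
      simp only [mem_Ioo] at ha hb
      simp only [] at hab
      nlinarith [hab])
    (fun x => x ^ (-(1/2):ℝ) * (1 - x) ^ α)
  rw [himg] at hcv
  have hcong : ∀ x ∈ Ioo (0:ℝ) 1,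
      |2*x| • ((x^2) ^ (-(1/2):ℝ) * (1 - x^2) ^ α) = 2 * (1 - x^2) ^ α := by
    intro x hx
    obtain ⟨hx0, hx1⟩ := hx
    have h2 : (x^2 : ℝ) ^ (-(1/2):ℝ) = x⁻¹ := by
      rw [← Real.rpow_natCast x 2, ← Real.rpow_mul hx0.le]
      norm_num [Real.rpow_neg_one]
    rw [h2, abs_of_pos (by linarith), smul_eq_mul]
    field_simp
  rw [setIntegral_congr_fun measurableSet_Ioo hcong] at hcv
  have hbeta := beta_val hα
  rw [intervalIntegral.integral_of_le (by norm_num : (0:ℝ) ≤ 1),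
    integral_Ioc_eq_integral_Ioo] at hbeta
  rw [hcv, MeasureTheory.integral_const_mul] at hbeta
  rw [intervalIntegral.integral_of_le (by norm_num : (0:ℝ) ≤ 1),
    integral_Ioc_eq_integral_Ioo]
  linarith

private lemma int_scaled {α : ℝ} (hα : 0 < α) :
    ∫ t in (0:ℝ)..(Real.sqrt 6), (1 - t^2/6) ^ α
      = Real.sqrt 6 * (Real.sqrt π * Real.Gamma (α + 1) / Real.Gamma (α + 3/2) / 2) := by
  have hs6 : (0:ℝ) < Real.sqrt 6 := Real.sqrt_pos.mpr (by norm_num)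
  have hscale := intervalIntegral.integral_comp_mul_left (a := (0:ℝ)) (b := 1)
    (f := fun t => (1 - t^2/6) ^ α) (c := Real.sqrt 6) hs6.ne'
  have hcong : ∀ x ∈ uIcc (0:ℝ) 1,
      (1 - (Real.sqrt 6 * x)^2/6 : ℝ) ^ α = (1 - x^2) ^ α := by
    intro x _
    congr 1
    rw [mul_pow, Real.sq_sqrt (by norm_num : (0:ℝ) ≤ 6)]
    ring
  rw [intervalIntegral.integral_congr hcong, int_one_sub_sq hα, mul_zero, mul_one,
    smul_eq_mul] at hscale
  rw [hscale, ← mul_assoc, mul_inv_cancel₀ hs6.ne', one_mul]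

set_option maxHeartbeats 2000000 in
theorem ball_moment_two_sided (α : ℝ) (hα : 2 < α) :
    Real.sqrt (6 / α) * (Real.sqrt α * Real.Gamma (α + 1) * Real.sqrt Real.pi /
        Real.Gamma (α + 3 / 2))
      ≤ (∫ t : ℝ, |Real.sin t| ^ α / |t| ^ α) ∧
    (∫ t : ℝ, |Real.sin t| ^ α / |t| ^ α)
      ≤ Real.sqrt (6 / α) * Real.sqrt Real.pi * (1 + 1 / (α - 1)) := by
  have hα0 : (0:ℝ) < α := by linarith
  set f : ℝ → ℝ := fun t => |Real.sin t| ^ α / |t| ^ α with hf_def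
  obtain ⟨c, hc_def⟩ : ∃ c : ℝ, c = 13/5 := ⟨13/5, rfl⟩
  have hc : (0:ℝ) < c := by rw [hc_def]; norm_num
  -- basic facts
  have hfnn : ∀ t, 0 ≤ f t := fun t => by
    simp only [hf_def]
    positivity
  have hf1 : ∀ t, f t ≤ 1 := by
    intro t
    rcases eq_or_ne t 0 with rfl | ht
    · simp [hf_def, Real.zero_rpow hα0.ne']
    · have h1 : (0:ℝ) < |t| ^ α := Real.rpow_pos_of_pos (abs_pos.mpr ht) α
      simp only [hf_def]
      rw [div_le_one h1]
      exact Real.rpow_le_rpow (abs_nonneg _) Real.abs_sin_le_abs hα0.le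
  have hnum : Continuous fun t : ℝ => |Real.sin t| ^ α :=
    Continuous.rpow_const (continuous_sin.abs) (fun x => Or.inr hα0.le)
  have hden : Continuous fun t : ℝ => |t| ^ α :=
    Continuous.rpow_const (continuous_abs) (fun x => Or.inr hα0.le)
  have hmeas : Measurable f := hnum.measurable.div hden.measurable
  -- integrability on (0, c]
  have hi1 : IntegrableOn f (Ioc 0 c) := by
    apply Measure.integrableOn_of_bounded (M := 1) measure_Ioc_lt_top.ne
      hmeas.aestronglyMeasurable
    filter_upwards with t
    rw [Real.norm_eq_abs, abs_of_nonneg (hfnn t)]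
    exact hf1 t
  -- tail bound pointwise
  have htail : ∀ t ∈ Ioi c, f t ≤ t ^ (-α) := by
    intro t ht
    have ht0 : (0:ℝ) < t := lt_trans hc ht
    have h1 : |Real.sin t| ^ α ≤ 1 :=
      Real.rpow_le_one (abs_nonneg _) (abs_le.mpr ⟨Real.neg_one_le_sin t, Real.sin_le_one t⟩)
        hα0.le
    have h2 : (0:ℝ) < t ^ α := Real.rpow_pos_of_pos ht0 α
    simp only [hf_def]
    rw [abs_of_pos ht0, Real.rpow_neg ht0.le]
    calc |Real.sin t| ^ α / t ^ α ≤ 1 / t ^ α := (div_le_div_iff_of_pos_right h2).mpr h1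
      _ = (t ^ α)⁻¹ := one_div _
  have hrpow_int : IntegrableOn (fun t : ℝ => t ^ (-α)) (Ioi c) :=
    integrableOn_Ioi_rpow_of_lt (by linarith) hc
  have hi2 : IntegrableOn f (Ioi c) := by
    apply Integrable.mono' hrpow_int hmeas.aestronglyMeasurable.restrict
    rw [ae_restrict_iff' measurableSet_Ioi]
    filter_upwards with t ht
    rw [Real.norm_eq_abs, abs_of_nonneg (hfnn t)]
    exact htail t ht
  have hIoi : IntegrableOn f (Ioi 0) := by
    rw [← Ioc_union_Ioi_eq_Ioi hc.le, integrableOn_union]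
    exact ⟨hi1, hi2⟩
  -- even reduction
  have hfeq : ∀ t : ℝ, f |t| = f t := by
    intro t
    have h1 : abs (Real.sin |t|) = |Real.sin t| := by
      rcases le_total 0 t with h | h
      · rw [abs_of_nonneg h]
      · rw [abs_of_nonpos h, Real.sin_neg, abs_neg]
    simp only [hf_def, h1, abs_abs]
  have hsplit : (∫ t : ℝ, f t) = 2 * ∫ t in Ioi 0, f t := by
    rw [← integral_comp_abs (f := f)]
    congr 1
    ext t
    rw [hfeq]
  constructor
  · -- LOWER BOUND
    have hs6 : (0:ℝ) < Real.sqrt 6 := Real.sqrt_pos.mpr (by norm_num)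
    have hglow : ∀ t ∈ Ioc (0:ℝ) (Real.sqrt 6), (1 - t^2/6) ^ α ≤ f t := by
      intro t ht
      obtain ⟨ht0, ht6⟩ := ht
      have ht2 : t^2 ≤ 6 := by
        have := pow_le_pow_left₀ ht0.le ht6 2
        rwa [Real.sq_sqrt (by norm_num : (0:ℝ) ≤ 6)] at this
      have hb : (0:ℝ) ≤ 1 - t^2/6 := by linarith
      have hsin : t * (1 - t^2/6) ≤ |Real.sin t| := by
        calc t * (1 - t^2/6) = t - t^3/6 := by ring
          _ ≤ Real.sin t := sin_ge_cubic ht0.le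
          _ ≤ |Real.sin t| := le_abs_self _
      have hdiv : 1 - t^2/6 ≤ |Real.sin t| / |t| := by
        rw [abs_of_pos ht0, le_div_iff₀ ht0]
        linarith [hsin]
      calc (1 - t^2/6) ^ α ≤ (|Real.sin t| / |t|) ^ α :=
            Real.rpow_le_rpow hb hdiv hα0.le
        _ = f t := by
            simp only [hf_def]
            rw [Real.div_rpow (abs_nonneg _) (abs_nonneg _)]
    have hgcont : Continuous fun t : ℝ => (1 - t^2/6) ^ α :=
      Continuous.rpow_const (by continuity) (fun x => Or.inr hα0.le)
    have hmono : ∫ t in Ioc (0:ℝ) (Real.sqrt 6), (1 - t^2/6) ^ α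
        ≤ ∫ t in Ioc (0:ℝ) (Real.sqrt 6), f t := by
      apply setIntegral_mono_on (hgcont.integrableOn_Ioc) (hIoi.mono_set Ioc_subset_Ioi_self)
        measurableSet_Ioc hglow
    have hmono2 : ∫ t in Ioc (0:ℝ) (Real.sqrt 6), f t ≤ ∫ t in Ioi 0, f t := by
      apply setIntegral_mono_set hIoi (Filter.Eventually.of_forall (fun t => hfnn t))
        (HasSubset.Subset.eventuallyLE Ioc_subset_Ioi_self)
    have hval : ∫ t in Ioc (0:ℝ) (Real.sqrt 6), (1 - t^2/6) ^ α
        = Real.sqrt 6 * (Real.sqrt π * Real.Gamma (α + 1) / Real.Gamma (α + 3/2) / 2) := by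
      rw [← intervalIntegral.integral_of_le hs6.le]
      exact int_scaled hα0
    have h6 : Real.sqrt (6/α) * Real.sqrt α = Real.sqrt 6 := by
      rw [← Real.sqrt_mul (by positivity), div_mul_cancel₀]
      exact hα0.ne'
    have hLHS : Real.sqrt (6 / α) * (Real.sqrt α * Real.Gamma (α + 1) * Real.sqrt Real.pi /
        Real.Gamma (α + 3 / 2))
        = 2 * (Real.sqrt 6 * (Real.sqrt π * Real.Gamma (α + 1) / Real.Gamma (α + 3/2) / 2)) := by
      rw [← h6]; ring
    rw [hsplit, hLHS]
    have : Real.sqrt 6 * (Real.sqrt π * Real.Gamma (α + 1) / Real.Gamma (α + 3/2) / 2)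
        ≤ ∫ t in Ioi 0, f t := by
      rw [← hval]
      exact le_trans hmono hmono2
    linarith
  · -- UPPER BOUND
    have hb6 : (0:ℝ) < α/6 := by linarith
    set gauss : ℝ → ℝ := fun x => Real.exp (-(α/6) * x^2) with hg_def
    have hgauss_int : Integrable gauss := integrable_exp_neg_mul_sq hb6
    have hup : ∀ t ∈ Ioc (0:ℝ) c, f t ≤ gauss t := by
      intro t ht
      obtain ⟨ht0, htc⟩ := ht
      have hsin_nn : 0 ≤ Real.sin t := Real.sin_nonneg_of_nonneg_of_le_pi ht0.le
        (by linarith [Real.pi_gt_three, hc_def ▸ htc])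
      have hx0 : (0:ℝ) ≤ t^2/6 := by positivity
      have htc' : t ≤ 13/5 := by simpa [hc_def] using htc
      have hx : t^2/6 ≤ 6/5 := by nlinarith [htc', ht0.le]
      have h1 := sin_le_quintic ht0.le
      have h2 := exp_neg_ge_cubic hx0
      have h3 : (3/10) * (t^2/6)^2 ≤ (t^2/6)^2/2 - (t^2/6)^3/6 := by
        nlinarith [mul_nonneg (sq_nonneg (t^2/6)) (show (0:ℝ) ≤ 1/5 - (t^2/6)/6 by linarith)]
      have key : Real.sin t ≤ t * Real.exp (-(t^2/6)) := by
        calc Real.sin t ≤ t - t^3/6 + t^5/120 := h1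
          _ = t * (1 - t^2/6 + (3/10) * (t^2/6)^2) := by ring
          _ ≤ t * (1 - t^2/6 + (t^2/6)^2/2 - (t^2/6)^3/6) := by
              apply mul_le_mul_of_nonneg_left (by linarith) ht0.le
          _ ≤ t * Real.exp (-(t^2/6)) := mul_le_mul_of_nonneg_left h2 ht0.le
      have hdivle : Real.sin t / t ≤ Real.exp (-(t^2/6)) := by
        rw [div_le_iff₀ ht0]
        linarith [key]
      simp only [hf_def, hg_def]
      rw [abs_of_pos ht0, abs_of_nonneg hsin_nn, ← Real.div_rpow hsin_nn ht0.le]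
      calc (Real.sin t / t) ^ α ≤ Real.exp (-(t^2/6)) ^ α :=
            Real.rpow_le_rpow (div_nonneg hsin_nn ht0.le) hdivle hα0.le
        _ = Real.exp (-(α/6) * t^2) := by
            rw [← Real.exp_mul]
            congr 1
            ring
    have hg_nn : ∀ t, 0 ≤ gauss t := fun t => (Real.exp_pos _).le
    have hup1 : ∫ t in Ioc (0:ℝ) c, f t ≤ ∫ t in Ioc (0:ℝ) c, gauss t :=
      setIntegral_mono_on hi1 hgauss_int.integrableOn measurableSet_Ioc hup
    have hup2 : ∫ t in Ioc (0:ℝ) c, gauss t ≤ ∫ t in Ioi 0, gauss t :=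
      setIntegral_mono_set hgauss_int.integrableOn
        (Filter.Eventually.of_forall hg_nn)
        (HasSubset.Subset.eventuallyLE Ioc_subset_Ioi_self)
    have hup3 : ∫ t in Ioi (0:ℝ), gauss t = Real.sqrt (π/(α/6)) / 2 :=
      integral_gaussian_Ioi (α/6)
    have hGeq : Real.sqrt (π/(α/6)) = Real.sqrt (6/α) * Real.sqrt π := by
      rw [← Real.sqrt_mul (show (0:ℝ) ≤ 6/α by positivity) π]
      congr 1
      field_simp
    -- tail integral
    have htail_int : ∫ t in Ioi c, f t ≤ ((c:ℝ) ^ (α-1))⁻¹ / (α-1) := by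
      have h1 : ∫ t in Ioi c, f t ≤ ∫ t in Ioi c, t ^ (-α) :=
        setIntegral_mono_on hi2 hrpow_int measurableSet_Ioi htail
      have h2 : ∫ t in Ioi c, (t:ℝ) ^ (-α) = -c ^ (-α+1) / (-α+1) :=
        integral_Ioi_rpow_of_lt (by linarith) hc
      have h3 : -c ^ (-α+1) / (-α+1) = ((c:ℝ) ^ (α-1))⁻¹ / (α-1) := by
        rw [show (-α+1 : ℝ) = -(α-1) by ring, Real.rpow_neg hc.le]
        rw [neg_div, div_neg, neg_neg]
      rw [h2, h3] at h1
      exact h1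
    -- Bernoulli / numeric bound : 2 * (c^(α-1))⁻¹ ≤ √(6/α) * √π
    have hT : (0:ℝ) < (c:ℝ) ^ (α-1) := Real.rpow_pos_of_pos hc (α-1)
    have hbern : 1 + (α-1) * (8/5) ≤ (c:ℝ) ^ (α-1) := by
      have := one_add_mul_self_le_rpow_one_add (show (-1:ℝ) ≤ 8/5 by norm_num)
        (show (1:ℝ) ≤ α - 1 by linarith)
      norm_num at this ⊢
      convert this using 2 <;> norm_num [hc_def]
    have hsqα : Real.sqrt α ≤ α := by
      calc Real.sqrt α ≤ Real.sqrt (α^2) := Real.sqrt_le_sqrt (by nlinarith)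
        _ = α := by rw [Real.sqrt_sq hα0.le]
    have hsqα0 : (0:ℝ) < Real.sqrt α := Real.sqrt_pos.mpr hα0
    have hGlb : 4 / Real.sqrt α ≤ Real.sqrt (6/α) * Real.sqrt π := by
      rw [← Real.sqrt_mul (show (0:ℝ) ≤ 6/α by positivity) π]
      have h16 : (16:ℝ)/α ≤ 6/α*π := by
        rw [div_mul_eq_mul_div]
        exact (div_le_div_iff_of_pos_right hα0).mpr (by nlinarith [Real.pi_gt_three])
      calc 4 / Real.sqrt α = Real.sqrt (16/α) := by
            rw [Real.sqrt_div (by norm_num : (0:ℝ) ≤ 16) α,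
              show Real.sqrt 16 = 4 by
                rw [show (16:ℝ) = 4^2 by norm_num, Real.sqrt_sq (by norm_num)]]
        _ ≤ Real.sqrt (6/α*π) := Real.sqrt_le_sqrt h16
    have hkey : 2 * ((c:ℝ) ^ (α-1))⁻¹ ≤ Real.sqrt (6/α) * Real.sqrt π := by
      have h2T : 2 * ((c:ℝ) ^ (α-1))⁻¹ ≤ 4 / Real.sqrt α := by
        rw [show 2 * ((c:ℝ) ^ (α-1))⁻¹ = 2 / c ^ (α-1) from (div_eq_mul_inv 2 _).symm,
          div_le_div_iff₀ hT hsqα0]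
        nlinarith [hbern, hsqα]
      exact h2T.trans hGlb
    -- assemble
    have hIsplit : ∫ t in Ioi (0:ℝ), f t
        = (∫ t in Ioc (0:ℝ) c, f t) + ∫ t in Ioi c, f t := by
      rw [← Ioc_union_Ioi_eq_Ioi hc.le,
        setIntegral_union (Ioc_disjoint_Ioi le_rfl) measurableSet_Ioi hi1 hi2]
    rw [hsplit, hIsplit]
    have hA : ∫ t in Ioc (0:ℝ) c, f t ≤ Real.sqrt (6/α) * Real.sqrt π / 2 := by
      rw [← hGeq, ← hup3]
      exact hup1.trans hup2
    have hfin : Real.sqrt (6/α) * Real.sqrt π + 2 * (((c:ℝ)^(α-1))⁻¹ / (α-1))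
        ≤ Real.sqrt (6/α) * Real.sqrt π * (1 + 1/(α-1)) := by
      have hα1 : (0:ℝ) < α - 1 := by linarith
      have h9 : 2 * (((c:ℝ)^(α-1))⁻¹ / (α-1))
          ≤ (Real.sqrt (6/α) * Real.sqrt π) / (α-1) := by
        rw [mul_div_assoc']
        exact (div_le_div_iff_of_pos_right hα1).mpr hkey
      have h10 : Real.sqrt (6/α) * Real.sqrt π * (1 + 1/(α-1))
          = Real.sqrt (6/α) * Real.sqrt π + (Real.sqrt (6/α) * Real.sqrt π) / (α-1) := by
        field_simp
      linarith
    linarith [htail_int, hA, hfin]
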